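/- For any probability distributions π*, π on a finite set A, Σ_{a : π*_a < π_a} π*_a log(π_a/π*_a) ≤ e^{−1}. -/

import Mathlib

theorem stmt_15 {A : Type*} [Fintype A]
    (piStar pi : A → ℝ)
    (hstar : (∀ a, 0 ≤ piStar a) ∧ ∑ a, piStar a = 1)
    (hpi : (∀ a, 0 ≤ pi a) ∧ ∑ a, pi a = 1) :
    ∑ a ∈ Finset.univ.filter (fun a => piStar a < pi a),
        piStar a * Real.log (pi a / piStar a) ≤ Real.exp (-1) := by
  obtain ⟨hs0, hs1⟩ := hstar
  obtain ⟨hp0, hp1⟩ := hpi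
  have key : ∀ a ∈ Finset.univ.filter (fun a => piStar a < pi a),
      piStar a * Real.log (pi a / piStar a) ≤ pi a * Real.exp (-1) := by
    intro a ha
    rcases eq_or_lt_of_le (hs0 a) with h0 | h0
    · rw [← h0]; simp
      exact mul_nonneg (hp0 a) (Real.exp_nonneg _)
    · have hpa : 0 < pi a := lt_trans h0 (Finset.mem_filter.mp ha).2
      set t := pi a / piStar a with ht
      have htpos : 0 < t := div_pos hpa h0
      have hlog : Real.log t ≤ t * Real.exp (-1) := by
        have h1 : Real.log (t * Real.exp (-1)) ≤ t * Real.exp (-1) - 1 :=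
          Real.log_le_sub_one_of_pos (by positivity)
        rw [Real.log_mul (ne_of_gt htpos) (Real.exp_ne_zero _), Real.log_exp] at h1
        linarith
      calc piStar a * Real.log t ≤ piStar a * (t * Real.exp (-1)) := by
            exact mul_le_mul_of_nonneg_left hlog (le_of_lt h0)
        _ = pi a * Real.exp (-1) := by rw [ht]; field_simp
  calc ∑ a ∈ Finset.univ.filter (fun a => piStar a < pi a),
        piStar a * Real.log (pi a / piStar a)
      ≤ ∑ a ∈ Finset.univ.filter (fun a => piStar a < pi a), pi a * Real.exp (-1) :=
        Finset.sum_le_sum key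
    _ ≤ ∑ a, pi a * Real.exp (-1) := by
        apply Finset.sum_le_sum_of_subset_of_nonneg (Finset.filter_subset _ _)
        intro a _ _; exact mul_nonneg (hp0 a) (Real.exp_nonneg _)
    _ = Real.exp (-1) := by rw [← Finset.sum_mul, hp1, one_mul]
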